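/- arXiv:2105.00980 — 5 statements merged into one kernel-verified Lean document; each statement's English description precedes it below -/
import Mathlib

section
/- If L is a multiset of size v-1 with underlying set contained in {1,...,⌊v/2⌋} and L has a realization (i.e., there is a Hamiltonian path of K_v whose multiset of edge lengths equals L), then for every divisor d of v, the number of elements of L that are multiples of d is at most v-d. -/
/-- The cyclic edge length between vertices `a` and `b` in `K_v`. -/
def ell (v a b : ℕ) : ℕ := min (Nat.dist a b) (v - Nat.dist a b)

/-- The multiset of edge lengths of a path `h` in `K_v`. -/
def edgeLengths (v : ℕ) (h : List ℕ) : Multiset ℕ :=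
  ↑(List.zipWith (ell v) h h.tail)

/-- `h` is a Hamiltonian path on the vertex set `{0, ..., v-1}` of `K_v`:
it is a list using each of `0, ..., v-1` exactly once. -/
def IsHamPath (v : ℕ) (h : List ℕ) : Prop := h.Perm (List.range v)

lemma dvd_dist_iff (d a b : ℕ) : d ∣ Nat.dist a b ↔ a % d = b % d := by
  rcases le_total a b with hab | hab
  · rw [Nat.dist_eq_sub_of_le hab]
    exact ⟨fun hd => (Nat.modEq_iff_dvd' hab).2 hd, fun hd => (Nat.modEq_iff_dvd' hab).1 hd⟩
  · rw [Nat.dist_eq_sub_of_le_right hab]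
    constructor
    · intro hd; exact ((Nat.modEq_iff_dvd' hab).2 hd).symm
    · intro hd; exact (Nat.modEq_iff_dvd' hab).1 hd.symm

lemma ell_dvd_iff (v d a b : ℕ) (hd : d ∣ v) (ha : a < v) (hb : b < v) :
    d ∣ ell v a b ↔ a % d = b % d := by
  have hdef : Nat.dist a b = a - b + (b - a) := rfl
  have hdist : Nat.dist a b ≤ v := by omega
  rw [← dvd_dist_iff]
  unfold ell
  rcases min_cases (Nat.dist a b) (v - Nat.dist a b) with ⟨hm, _⟩ | ⟨hm, _⟩
  · rw [hm]
  · rw [hm]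
    constructor
    · intro hdd
      have heq : Nat.dist a b = v - (v - Nat.dist a b) := by omega
      rw [heq]; exact Nat.dvd_sub hd hdd
    · intro hdd; exact Nat.dvd_sub hd hdd

lemma key_count (v d : ℕ) (hd : d ∣ v) :
    ∀ l : List ℕ, (∀ x ∈ l, x < v) →
    List.countP (fun x => decide (d ∣ x)) (List.zipWith (ell v) l l.tail)
      ≤ l.length - ((l.map (· % d)).toFinset.card) := by
  intro l
  induction l with
  | nil => simp
  | cons a t ih =>
    intro hx
    cases t with
    | nil => simp
    | cons b t' =>
      have hxt : ∀ x ∈ b :: t', x < v := fun x hx' => hx x (List.mem_cons_of_mem _ hx')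
      have ha : a < v := hx a List.mem_cons_self
      have hb : b < v := hx b (by simp)
      have hiv := ih hxt
      have hcard_le : (((b :: t').map (· % d)).toFinset.card) ≤ (b :: t').length := by
        calc (((b :: t').map (· % d)).toFinset.card) ≤ ((b :: t').map (· % d)).length :=
              List.toFinset_card_le _
          _ = (b :: t').length := List.length_map _
      have hzip : List.zipWith (ell v) (a :: b :: t') (a :: b :: t').tail
          = ell v a b :: List.zipWith (ell v) (b :: t') (b :: t').tail := rfl
      rw [hzip, List.countP_cons]
      have hins : ((a :: b :: t').map (· % d)).toFinset
          = insert (a % d) (((b :: t').map (· % d)).toFinset) := by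
        simp
      by_cases heq : a % d = b % d
      · have hdvd : d ∣ ell v a b := (ell_dvd_iff v d a b hd ha hb).2 heq
        have hmem : a % d ∈ ((b :: t').map (· % d)).toFinset := by
          rw [heq]; simp
        have hcardeq : ((a :: b :: t').map (· % d)).toFinset.card
            = ((b :: t').map (· % d)).toFinset.card := by
          rw [hins, Finset.insert_eq_self.2 hmem]
        simp only [hcardeq, decide_eq_true_eq, hdvd, if_pos]
        simp only [List.length_cons] at *
        omega
      · have hndvd : ¬ d ∣ ell v a b := fun hc => heq ((ell_dvd_iff v d a b hd ha hb).1 hc)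
        have hcardle : ((a :: b :: t').map (· % d)).toFinset.card
            ≤ ((b :: t').map (· % d)).toFinset.card + 1 := by
          rw [hins]; exact Finset.card_insert_le _ _
        simp only [decide_eq_true_eq, hndvd, if_neg, not_false_iff]
        simp only [List.length_cons] at *
        omega

theorem stmt_2 (v : ℕ) (L : Multiset ℕ)
    (hcard : Multiset.card L = v - 1)
    (hU : ∀ l ∈ L, 1 ≤ l ∧ l ≤ v / 2)
    (hreal : ∃ h : List ℕ, List.Perm h
      (List.range v) ∧ edgeLengths v h = L) :
    ∀ d, d ∣ v → Multiset.card (L.filter (fun l => d ∣ l)) ≤ v - d := by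
  intro d hdvd
  rcases Nat.eq_zero_or_pos v with hv0 | hv
  · subst hv0
    have : L = 0 := by
      rw [← Multiset.card_eq_zero, hcard]
    subst this
    simp
  · have hdpos : 0 < d := Nat.pos_of_dvd_of_pos hdvd hv
    have hdle : d ≤ v := Nat.le_of_dvd hv hdvd
    obtain ⟨h, hperm, hE⟩ := hreal
    have hlen : h.length = v := by rw [hperm.length_eq, List.length_range]
    have hmem : ∀ x ∈ h, x < v := fun x hx =>
      List.mem_range.1 (hperm.mem_iff.1 hx)
    have hLfilter : Multiset.card (L.filter (fun l => d ∣ l))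
        = List.countP (fun x => decide (d ∣ x)) (List.zipWith (ell v) h h.tail) := by
      rw [← hE]
      simp [edgeLengths, List.countP_eq_length_filter]
    have hfin : ((h.map (· % d)).toFinset.card) = d := by
      have hset : (h.map (· % d)).toFinset = Finset.range d := by
        ext x
        simp only [List.mem_toFinset, List.mem_map, Finset.mem_range]
        constructor
        · rintro ⟨y, _, rfl⟩; exact Nat.mod_lt _ hdpos
        · intro hx
          refine ⟨x, ?_, Nat.mod_eq_of_lt hx⟩
          exact hperm.mem_iff.2 (List.mem_range.2 (lt_of_lt_of_le hx hdle))
      rw [hset, Finset.card_range]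
    have := key_count v d hdvd h hmem
    rw [hlen, hfin] at this
    rw [hLfilter]
    exact this
end

section
/- For each even integer x ≥ 4, the sequence [1, x+1, 0, 2x, x, x-1, 2x-1, 2x-2, x-2, x-3, 2x-3, ..., x+2, 2] (alternating pairs of the form (x-1-2j, 2x-1-2j),(2x-2-2j, x-2-2j)) is a Hamiltonian path on {0,1,...,2x} in K_{2x+1} whose multiset of edge lengths is {1^{x-1}, x^{x+1}}, where the length of an edge between u and w is min(|u-w|, (2x+1)-|u-w|). -/
section Aux

lemma zip_split (f : ℕ → ℕ → ℕ) (a : ℕ) (l l' : List ℕ) :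
    List.zipWith f (l ++ a :: l') (l ++ a :: l').tail =
      List.zipWith f (l ++ [a]) (l ++ [a]).tail ++ List.zipWith f (a :: l') l' := by
  induction l with
  | nil => simp
  | cons y ys ih =>
    cases ys with
    | nil => simp
    | cons z zs =>
      simp only [List.cons_append, List.tail_cons, List.zipWith_cons_cons] at ih ⊢
      rw [ih]

lemma edgeLengths_append (v : ℕ) (l l' : List ℕ) (a : ℕ) :
    edgeLengths v (l ++ a :: l') = edgeLengths v (l ++ [a]) + edgeLengths v (a :: l') := by
  simp only [edgeLengths]
  rw [zip_split, ← Multiset.coe_add]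
  rfl

lemma edgeLengths_append' (v : ℕ) (l l' : List ℕ) (a : ℕ) (h : l.getLast? = some a) :
    edgeLengths v (l ++ l') = edgeLengths v l + edgeLengths v (a :: l') := by
  have hne : l ≠ [] := by rintro rfl; simp at h
  have h2 : l.getLast hne = a := by
    rwa [List.getLast?_eq_getLast hne, Option.some_inj] at h
  conv_lhs => rw [← List.dropLast_append_getLast hne, h2]
  rw [List.append_assoc, List.singleton_append, edgeLengths_append,
    ← h2, List.dropLast_append_getLast hne]

/-- the j-th block of the path -/
def blk (x j : ℕ) : List ℕ := [x-1-2*j, 2*x-1-2*j, 2*x-2-2*j, x-2-2*j]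

/-- the tail part of the path -/
def F (x m : ℕ) : List ℕ := (List.range m).flatMap (blk x)

lemma F_succ (x m : ℕ) : F x (m+1) = F x m ++ blk x m := by
  simp [F, List.range_succ]

lemma F_multiset (x m : ℕ) (h : 2*m+2 ≤ x) :
    (F x m : Multiset ℕ) =
      (↑(List.range' (x-2*m) (2*m)) : Multiset ℕ) + ↑(List.range' (2*x-2*m) (2*m)) := by
  induction m with
  | zero => simp [F]
  | succ m ih =>
    have hm : 2*m+2 ≤ x := by omega
    rw [F_succ]
    have e1 : (List.range' (x-2*(m+1)) (2*(m+1)) : List ℕ) =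
        (x-2*m-2) :: (x-2*m-1) :: List.range' (x-2*m) (2*m) := by
      have h2 : 2*(m+1) = (2*m)+1+1 := by ring
      rw [h2, List.range'_succ, List.range'_succ]
      refine congrArg₂ _ (by omega) (congrArg₂ _ (by omega) ?_)
      congr 1
      omega
    have e2 : (List.range' (2*x-2*(m+1)) (2*(m+1)) : List ℕ) =
        (2*x-2*m-2) :: (2*x-2*m-1) :: List.range' (2*x-2*m) (2*m) := by
      have h2 : 2*(m+1) = (2*m)+1+1 := by ring
      rw [h2, List.range'_succ, List.range'_succ]
      refine congrArg₂ _ (by omega) (congrArg₂ _ (by omega) ?_)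
      congr 1
      omega
    rw [e1, e2]
    have b1 : x-1-2*m = x-2*m-1 := by omega
    have b2 : 2*x-1-2*m = 2*x-2*m-1 := by omega
    have b3 : 2*x-2-2*m = 2*x-2*m-2 := by omega
    have b4 : x-2-2*m = x-2*m-2 := by omega
    have : (↑(F x m ++ blk x m) : Multiset ℕ) = ↑(F x m) + ↑(blk x m) := by
      simp
    rw [this, ih hm, blk, b1, b2, b3, b4]
    simp only [← Multiset.cons_coe, ← Multiset.singleton_add, Multiset.coe_nil, add_zero]
    abel

lemma blk_lengths (x m : ℕ) (h : 2*m+4 ≤ x) :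
    edgeLengths (2*x+1) ((x-2*m) :: blk x m) = ↑[1, x, 1, x] := by
  simp only [blk, edgeLengths, List.tail_cons, List.zipWith_cons_cons, List.zipWith_nil_right]
  have c1 : ell (2*x+1) (x-2*m) (x-1-2*m) = 1 := by
    simp only [ell, Nat.dist]; omega
  have c2 : ell (2*x+1) (x-1-2*m) (2*x-1-2*m) = x := by
    simp only [ell, Nat.dist]; omega
  have c3 : ell (2*x+1) (2*x-1-2*m) (2*x-2-2*m) = 1 := by
    simp only [ell, Nat.dist]; omega
  have c4 : ell (2*x+1) (2*x-2-2*m) (x-2-2*m) = x := by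
    simp only [ell, Nat.dist]; omega
  rw [c1, c2, c3, c4]

lemma F_getLast (x m : ℕ) :
    ([1, x+1, 0, 2*x, x] ++ F x m).getLast? = some (x - 2*m) := by
  cases m with
  | zero => simp [F]
  | succ m =>
    rw [F_succ, ← List.append_assoc,
      List.getLast?_append_of_ne_nil _ (by simp [blk])]
    simp only [blk, List.getLast?_cons_cons, List.getLast?_singleton, Option.some_inj]
    omega

lemma L_edge (x m : ℕ) (h : 2*m+2 ≤ x) :
    edgeLengths (2*x+1) ([1, x+1, 0, 2*x, x] ++ F x m) =
      Multiset.replicate (2*m+1) 1 + Multiset.replicate (2*m+3) x := by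
  induction m with
  | zero =>
    have e0 : F x 0 = [] := rfl
    rw [e0, List.append_nil]
    simp only [edgeLengths, List.tail_cons, List.zipWith_cons_cons, List.zipWith_nil_right]
    have c1 : ell (2*x+1) 1 (x+1) = x := by simp only [ell, Nat.dist]; omega
    have c2 : ell (2*x+1) (x+1) 0 = x := by simp only [ell, Nat.dist]; omega
    have c3 : ell (2*x+1) 0 (2*x) = 1 := by simp only [ell, Nat.dist]; omega
    have c4 : ell (2*x+1) (2*x) x = x := by simp only [ell, Nat.dist]; omega
    rw [c1, c2, c3, c4]
    simp [← Multiset.cons_coe, ← Multiset.singleton_add]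
    abel
  | succ m ih =>
    have hm : 2*m+2 ≤ x := by omega
    rw [F_succ, ← List.append_assoc,
      edgeLengths_append' (2*x+1) _ (blk x m) (x-2*m) (F_getLast x m),
      ih hm, blk_lengths x m (by omega)]
    have h1 : 2*(m+1)+1 = (2*m+1)+1+1 := by ring
    have h2 : 2*(m+1)+3 = (2*m+3)+1+1 := by ring
    rw [h1, h2, Multiset.replicate_succ, Multiset.replicate_succ,
      Multiset.replicate_succ, Multiset.replicate_succ]
    simp only [← Multiset.cons_coe, ← Multiset.singleton_add, Multiset.coe_nil, add_zero]
    abel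

end Aux

theorem stmt_3 (x : ℕ) (hx : 4 ≤ x) (hev : Even x) :
    List.Perm ([1, x+1, 0, 2*x, x] ++
      (List.range ((x-2)/2)).flatMap (fun j =>
        [x-1-2*j, 2*x-1-2*j, 2*x-2-2*j, x-2-2*j]))
      (List.range (2*x+1)) ∧
    edgeLengths (2*x+1)
      ([1, x+1, 0, 2*x, x] ++
        (List.range ((x-2)/2)).flatMap (fun j =>
          [x-1-2*j, 2*x-1-2*j, 2*x-2-2*j, x-2-2*j])) =
      Multiset.replicate (x-1) 1 + Multiset.replicate (x+1) x := by
  obtain ⟨k, hk⟩ := hev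
  set m := (x-2)/2 with hmdef
  have hm : x = 2*m+2 := by omega
  have hF : (List.range ((x-2)/2)).flatMap (fun j =>
      [x-1-2*j, 2*x-1-2*j, 2*x-2-2*j, x-2-2*j]) = F x m := rfl
  constructor
  · rw [hF, ← Multiset.coe_eq_coe]
    have hmul : (↑([1, x+1, 0, 2*x, x] ++ F x m) : Multiset ℕ) =
        ↑([1, x+1, 0, 2*x, x] : List ℕ) + ↑(F x m) := by simp
    rw [hmul, F_multiset x m (by omega)]
    have r1 : x - 2*m = 2 := by omega
    have r2 : 2*x - 2*m = x + 2 := by omega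
    have r3 : 2*m = x - 2 := by omega
    rw [r1, r2, r3]
    -- decompose the range
    have hr : List.range (2*x+1) =
        List.range' 0 2 ++ List.range' 2 (x-2) ++ List.range' x 2 ++
          List.range' (x+2) (x-2) ++ List.range' (2*x) 1 := by
      rw [List.range_eq_range']
      have e1 : List.range' 0 2 ++ List.range' 2 (x-2) = List.range' 0 x := by
        have := List.range'_append (s := 0) (m := 2) (n := x-2) (step := 1)
        simp only [one_mul, mul_one] at this ⊢
        rw [show (0+2 : ℕ) = 2 by rfl] at this
        rw [this]; congr 1; omega
      have e2 : List.range' 0 x ++ List.range' x 2 = List.range' 0 (x+2) := by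
        have := List.range'_append (s := 0) (m := x) (n := 2) (step := 1)
        simp only [one_mul, mul_one] at this
        rw [show (0+x : ℕ) = x by omega] at this
        rw [this]
      have e3 : List.range' 0 (x+2) ++ List.range' (x+2) (x-2) = List.range' 0 (2*x) := by
        have := List.range'_append (s := 0) (m := x+2) (n := x-2) (step := 1)
        simp only [one_mul] at this
        rw [show (0+(x+2) : ℕ) = x+2 by omega] at this
        rw [this]; congr 1; omega
      have e4 : List.range' 0 (2*x) ++ List.range' (2*x) 1 = List.range' 0 (2*x+1) := by
        have := List.range'_append (s := 0) (m := 2*x) (n := 1) (step := 1)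
        simp only [one_mul] at this
        rw [show (0+2*x : ℕ) = 2*x by omega] at this
        rw [this]
      rw [e1, e2, e3, e4]
    rw [hr]
    have hr0 : (List.range' 0 2 : List ℕ) = [0, 1] := by decide
    have hrx : (List.range' x 2 : List ℕ) = [x, x+1] := by
      simp [List.range']
    have hr2x : (List.range' (2*x) 1 : List ℕ) = [2*x] := by
      simp [List.range']
    rw [hr0, hrx, hr2x]
    simp only [List.append_assoc, ← Multiset.coe_add,
      ← Multiset.cons_coe, ← Multiset.singleton_add, Multiset.coe_nil, add_zero]
    abel
  · rw [hF]
    have := L_edge x m (by omega)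
    rw [this]
    congr 1 <;> congr 1 <;> omega
end

section
/- For each odd integer x ≥ 5, the sequence [x, x+1, 1, 0, 2x, x-1, 2x-1, x-2, 2x-2, 2x-3, x-3, x-4, 2x-4, ..., x+2, 2] is a Hamiltonian path on {0,...,2x} in K_{2x+1} whose multiset of edge lengths is {1^{x-1}, x^{x+1}}. -/
def body (m c c' : ℕ) : List ℕ :=
  (List.range m).flatMap (fun i => [c - 2*i, c' - 2*i, c' - (2*i+1), c - (2*i+1)])

lemma body_succ (m c c' : ℕ) :
    body (m+1) c c' = [c, c', c' - 1, c - 1] ++ body m (c-2) (c'-2) := by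
  unfold body
  rw [List.range_succ_eq_map, List.flatMap_cons, List.flatMap_map]
  congr 1
  refine congrArg (fun f => List.flatMap f (List.range m)) (funext fun i => ?_)
  simp only [Function.comp_apply, Nat.succ_eq_add_one, List.cons.injEq, and_true]
  omega

lemma pairup (f : ℕ → List ℕ) : ∀ m, (List.range (2*m)).flatMap f
    = (List.range m).flatMap (fun i => f (2*i) ++ f (2*i+1))
  | 0 => by simp
  | (m+1) => by
    have h2 : 2*(m+1) = (2*m) + 1 + 1 := by ring
    rw [h2, List.range_succ, List.range_succ, List.flatMap_append, List.flatMap_append,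
      pairup f m, List.range_succ, List.flatMap_append]
    simp [List.append_assoc]

lemma range'_two (a : ℕ) : List.range' a 2 = [a, a+1] := rfl

lemma range'_three (a : ℕ) : List.range' a 3 = [a, a+1, a+2] := rfl

lemma body_coe (x : ℕ) : ∀ m c, 2*m ≤ c →
    (↑(body m c (c+x)) : Multiset ℕ)
      = ↑(List.range' (c+1-2*m) (2*m)) + ↑(List.range' (c+x+1-2*m) (2*m))
  | 0, c, _ => by simp [body]
  | (m+1), c, hc => by
    have hc2 : 2 ≤ c := by omega
    rw [body_succ]
    have h1 : c + x - 2 = (c-2) + x := by omega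
    rw [h1, ← Multiset.coe_add, body_coe x m (c-2) (by omega)]
    have h2 : 2*(m+1) = 2*m + 2 := by ring
    rw [h2, ← List.range'_append, ← List.range'_append]
    have e1 : c + 1 - (2*m + 2) = c - 2 + 1 - 2*m := by omega
    have e2 : c + x + 1 - (2*m + 2) = c - 2 + x + 1 - 2*m := by omega
    rw [e1, e2]
    rw [show c - 2 + 1 - 2*m + 1*(2*m) = c - 1 by omega,
        show c - 2 + x + 1 - 2*m + 1*(2*m) = c + x - 1 by omega]
    rw [range'_two, range'_two,
        show c - 1 + 1 = c by omega, show c + x - 1 + 1 = c + x by omega]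
    simp only [← Multiset.cons_coe, ← Multiset.singleton_add, Multiset.coe_nil, ← Multiset.coe_add]
    abel

lemma body_edges (x : ℕ) (hx : 5 ≤ x) : ∀ m, 1 ≤ m → ∀ c, 2*m ≤ c →
    (↑(List.zipWith (ell (2*x+1)) (body m c (c+x)) (body m c (c+x)).tail) : Multiset ℕ)
      = Multiset.replicate (2*m-1) 1 + Multiset.replicate (2*m) x := by
  intro m hm
  induction m, hm using Nat.le_induction with
  | base =>
    intro c hc
    rw [show (1:ℕ) = 0 + 1 from rfl, body_succ]
    simp only [body, List.range_zero, List.flatMap_nil, List.append_nil]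
    have e1 : ell (2*x+1) c (c+x) = x := by unfold ell Nat.dist; omega
    have e2 : ell (2*x+1) (c+x) (c+x-1) = 1 := by unfold ell Nat.dist; omega
    have e3 : ell (2*x+1) (c+x-1) (c-1) = x := by unfold ell Nat.dist; omega
    simp only [List.tail_cons, List.zipWith_cons_cons, List.zipWith_nil_right, e1, e2, e3]
    simp [Multiset.replicate_succ]
    abel
  | succ m hm ih =>
    intro c hc
    rw [body_succ]
    have hBc : c + x - 2 = (c-2) + x := by omega
    obtain ⟨k, rfl⟩ : ∃ k, m = k + 1 := ⟨m-1, by omega⟩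
    obtain ⟨tB, hB⟩ : ∃ t, body (k+1) (c-2) (c+x-2) = (c-2) :: t := ⟨_, by rw [body_succ]; rfl⟩
    rw [hB]
    have e1 : ell (2*x+1) c (c+x) = x := by unfold ell Nat.dist; omega
    have e2 : ell (2*x+1) (c+x) (c+x-1) = 1 := by unfold ell Nat.dist; omega
    have e3 : ell (2*x+1) (c+x-1) (c-1) = x := by unfold ell Nat.dist; omega
    have e4 : ell (2*x+1) (c-1) (c-2) = 1 := by unfold ell Nat.dist; omega
    simp only [List.cons_append, List.nil_append, List.tail_cons, List.zipWith_cons_cons,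
      e1, e2, e3, e4]
    have hz : List.zipWith (ell (2*x+1)) ((c-2) :: tB) tB
        = List.zipWith (ell (2*x+1)) (body (k+1) (c-2) ((c-2)+x)) (body (k+1) (c-2) ((c-2)+x)).tail := by
      rw [← hBc, hB]
      rfl
    rw [hz, ← Multiset.cons_coe, ← Multiset.cons_coe, ← Multiset.cons_coe, ← Multiset.cons_coe,
      ih (c-2) (by omega)]
    rw [show 2*(k+1+1) - 1 = (2*(k+1)-1) + 1 + 1 by omega,
      show 2*(k+1+1) = 2*(k+1) + 1 + 1 by omega,
      Multiset.replicate_succ, Multiset.replicate_succ, Multiset.replicate_succ,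
      Multiset.replicate_succ]
    simp only [← Multiset.singleton_add]
    abel

theorem stmt_4 (x : ℕ) (hx : 5 ≤ x) (hodd : Odd x) :
    List.Perm ([x, x+1, 1, 0, 2*x, x-1, 2*x-1] ++
      (List.range (x-3)).flatMap (fun j =>
        if j % 2 = 0 then [x-2-j, 2*x-2-j] else [2*x-2-j, x-2-j]))
      (List.range (2*x+1)) ∧
    edgeLengths (2*x+1)
      ([x, x+1, 1, 0, 2*x, x-1, 2*x-1] ++
        (List.range (x-3)).flatMap (fun j =>
          if j % 2 = 0 then [x-2-j, 2*x-2-j] else [2*x-2-j, x-2-j])) =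
      Multiset.replicate (x-1) 1 + Multiset.replicate (x+1) x := by
  obtain ⟨m, hmx⟩ : ∃ m, x = 2*m + 3 := by
    obtain ⟨k, hk⟩ := hodd
    exact ⟨k - 1, by omega⟩
  have hm1 : 1 ≤ m := by omega
  have hbody : (List.range (x-3)).flatMap (fun j =>
        if j % 2 = 0 then [x-2-j, 2*x-2-j] else [2*x-2-j, x-2-j])
      = body m (x-2) (2*x-2) := by
    rw [show x - 3 = 2*m by omega, pairup]
    unfold body
    refine congrArg (fun f => List.flatMap f (List.range m)) (funext fun i => ?_)
    simp [Nat.mul_mod_right, Nat.mul_add_mod]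
  rw [hbody]
  constructor
  · rw [← Multiset.coe_eq_coe, show 2*x-2 = (x-2) + x by omega, ← Multiset.coe_add,
      body_coe x m (x-2) (by omega)]
    rw [show x-2+1-2*m = 2 by omega, show x-2+x+1-2*m = x+2 by omega,
      show 2*m = x-3 by omega, List.range_eq_range']
    have h1 : List.range' 0 2 ++ List.range' 2 (x-3) = List.range' 0 (x-3+2) := by
      have := List.range'_append (s := 0) (m := 2) (n := x-3) (step := 1)
      rw [Nat.add_comm 2 (x-3)] at this
      simpa using this
    have h2 : List.range' 0 (x-3+2) ++ List.range' (x-1) 3 = List.range' 0 (x+2) := by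
      have := List.range'_append (s := 0) (m := x-3+2) (n := 3) (step := 1)
      rw [show 0 + 1*(x-3+2) = x-1 by omega, show x-3+2 + 3 = x+2 by omega] at this
      exact this
    have h3 : List.range' 0 (x+2) ++ List.range' (x+2) (x-3) = List.range' 0 (2*x-1) := by
      have := List.range'_append (s := 0) (m := x+2) (n := x-3) (step := 1)
      rw [show 0 + 1*(x+2) = x+2 by omega, show x+2 + (x-3) = 2*x-1 by omega] at this
      exact this
    have h4 : List.range' 0 (2*x-1) ++ List.range' (2*x-1) 2 = List.range' 0 (2*x+1) := by
      have := List.range'_append (s := 0) (m := 2*x-1) (n := 2) (step := 1)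
      rw [show 0 + 1*(2*x-1) = 2*x-1 by omega, show 2*x-1 + 2 = 2*x+1 by omega] at this
      exact this
    rw [← h4, ← h3, ← h2, ← h1]
    rw [range'_two, range'_two, range'_three,
      show x-1+1 = x by omega, show x-1+2 = x+1 by omega, show 2*x-1+1 = 2*x by omega]
    simp only [← Multiset.coe_add]
    simp only [← Multiset.cons_coe, ← Multiset.singleton_add, Multiset.coe_nil, add_zero]
    abel
  · unfold edgeLengths
    obtain ⟨k, rfl⟩ : ∃ k, m = k + 1 := ⟨m-1, by omega⟩
    obtain ⟨tB, hB⟩ : ∃ t, body (k+1) (x-2) (2*x-2) = (x-2) :: t := ⟨_, by rw [body_succ]; rfl⟩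
    rw [hB]
    have e1 : ell (2*x+1) x (x+1) = 1 := by unfold ell Nat.dist; omega
    have e2 : ell (2*x+1) (x+1) 1 = x := by unfold ell Nat.dist; omega
    have e3 : ell (2*x+1) 1 0 = 1 := by unfold ell Nat.dist; omega
    have e4 : ell (2*x+1) 0 (2*x) = 1 := by unfold ell Nat.dist; omega
    have e5 : ell (2*x+1) (2*x) (x-1) = x := by unfold ell Nat.dist; omega
    have e6 : ell (2*x+1) (x-1) (2*x-1) = x := by unfold ell Nat.dist; omega
    have e7 : ell (2*x+1) (2*x-1) (x-2) = x := by unfold ell Nat.dist; omega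
    simp only [List.cons_append, List.nil_append, List.tail_cons, List.zipWith_cons_cons,
      e1, e2, e3, e4, e5, e6, e7]
    have hz : List.zipWith (ell (2*x+1)) ((x-2) :: tB) tB
        = List.zipWith (ell (2*x+1)) (body (k+1) (x-2) ((x-2)+x)) (body (k+1) (x-2) ((x-2)+x)).tail := by
      rw [show (x-2)+x = 2*x-2 by omega, hB]
      rfl
    rw [hz, ← Multiset.cons_coe, ← Multiset.cons_coe, ← Multiset.cons_coe, ← Multiset.cons_coe,
      ← Multiset.cons_coe, ← Multiset.cons_coe, ← Multiset.cons_coe,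
      body_edges x hx (k+1) (by omega) (x-2) (by omega)]
    rw [show x-1 = (2*(k+1)-1) + 1 + 1 + 1 by omega,
      show x+1 = 2*(k+1) + 1 + 1 + 1 + 1 by omega,
      Multiset.replicate_succ, Multiset.replicate_succ, Multiset.replicate_succ,
      Multiset.replicate_succ, Multiset.replicate_succ, Multiset.replicate_succ,
      Multiset.replicate_succ]
    simp only [← Multiset.singleton_add]
    abel
end

section
/- For each even integer x ≥ 4, the sequence [x, 2x, 0, x+1, 1, x+2, 2, 3, x+3, x+4, 4, 5, x+5, ..., x-1, 2x-1] is a Hamiltonian path on {0,...,2x} in K_{2x+1} whose multiset of edge lengths is {1^{x-2}, x^{x+2}}. -/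
lemma edge_cons (v a b : ℕ) (l : List ℕ) :
    edgeLengths v (a :: b :: l) = ell v a b ::ₘ edgeLengths v (b :: l) := rfl

lemma edge_append2 (v : ℕ) : ∀ (l : List ℕ) (c a b : ℕ), l.getLast? = some c →
    edgeLengths v (l ++ [a, b]) = edgeLengths v l + {ell v c a, ell v a b}
  | [], c, a, b, h => by simp at h
  | [d], c, a, b, h => by
      simp only [List.getLast?_singleton, Option.some.injEq] at h; subst h
      show (↑[ell v d a, ell v a b] : Multiset ℕ) = edgeLengths v [d] + _
      have : edgeLengths v [d] = 0 := rfl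
      rw [this, zero_add]
      rfl
  | d :: e :: t, c, a, b, h => by
      have h2 : (e :: t).getLast? = some c := by simpa using h
      have : (d :: e :: t) ++ [a, b] = d :: ((e :: t) ++ [a, b]) := by simp
      rw [this, show d :: ((e :: t) ++ [a,b]) = d :: e :: (t ++ [a,b]) by simp]
      rw [edge_cons, show e :: (t ++ [a,b]) = (e :: t) ++ [a,b] by simp,
        edge_append2 v (e :: t) c a b h2, edge_cons]
      simp only [← Multiset.singleton_add]
      abel

lemma flatmap_edges (x : ℕ) (hx : 1 ≤ x) : ∀ n : ℕ,
    edgeLengths (2*x+1) (2 :: (List.range n).flatMap (fun j =>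
        if j % 2 = 0 then [3+j, x+3+j] else [x+3+j, 3+j]))
      = Multiset.replicate n 1 + Multiset.replicate n x ∧
    (2 :: (List.range n).flatMap (fun j =>
        if j % 2 = 0 then [3+j, x+3+j] else [x+3+j, 3+j])).getLast?
      = some (if n % 2 = 0 then 2+n else x+2+n)
  | 0 => by constructor <;> simp <;> rfl
  | (n+1) => by
    obtain ⟨ih1, ih2⟩ := flatmap_edges x hx n
    rw [List.range_succ, List.flatMap_append]
    have hcons : ∀ L : List ℕ, 2 :: ((List.range n).flatMap (fun j =>
        if j % 2 = 0 then [3+j, x+3+j] else [x+3+j, 3+j]) ++ L)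
        = (2 :: (List.range n).flatMap (fun j =>
        if j % 2 = 0 then [3+j, x+3+j] else [x+3+j, 3+j])) ++ L := by simp
    rcases Nat.even_or_odd n with he | ho
    · have hn : n % 2 = 0 := Nat.even_iff.mp he
      have hb : [n].flatMap (fun j => if j % 2 = 0 then [3+j, x+3+j] else [x+3+j, 3+j])
          = [3+n, x+3+n] := by simp [hn]
      rw [hb, hcons]
      rw [hn] at ih2; simp only [if_pos rfl] at ih2
      constructor
      · rw [edge_append2 _ _ (2+n) _ _ ih2, ih1]
        have e1 : ell (2*x+1) (2+n) (3+n) = 1 := by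
          simp [ell, Nat.dist]; omega
        have e2 : ell (2*x+1) (3+n) (x+3+n) = x := by
          simp [ell, Nat.dist]; omega
        rw [e1, e2]
        simp [Multiset.replicate_succ, Multiset.insert_eq_cons,
          ← Multiset.singleton_add]
        abel
      · rw [List.getLast?_append]
        have : (n+1) % 2 ≠ 0 := by omega
        simp [this]; omega
    · have hn : n % 2 = 1 := Nat.odd_iff.mp ho
      have hb : [n].flatMap (fun j => if j % 2 = 0 then [3+j, x+3+j] else [x+3+j, 3+j])
          = [x+3+n, 3+n] := by simp [hn]
      rw [hb, hcons]
      rw [hn] at ih2; simp only [if_neg (by omega : ¬ (1:ℕ) = 0)] at ih2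
      constructor
      · rw [edge_append2 _ _ (x+2+n) _ _ ih2, ih1]
        have e1 : ell (2*x+1) (x+2+n) (x+3+n) = 1 := by
          simp [ell, Nat.dist]; omega
        have e2 : ell (2*x+1) (x+3+n) (3+n) = x := by
          simp [ell, Nat.dist]; omega
        rw [e1, e2]
        simp [Multiset.replicate_succ, Multiset.insert_eq_cons,
          ← Multiset.singleton_add]
        abel
      · rw [List.getLast?_append]
        have : (n+1) % 2 = 0 := by omega
        simp [this]
        omega

lemma flatmap_perm (x : ℕ) : ∀ n : ℕ,
    (((List.range n).flatMap (fun j =>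
        if j % 2 = 0 then [3+j, x+3+j] else [x+3+j, 3+j]) : List ℕ) : Multiset ℕ)
      = (Multiset.range n).map (fun j => 3+j) + (Multiset.range n).map (fun j => x+3+j)
  | 0 => by simp
  | (n+1) => by
    rw [List.range_succ, List.flatMap_append, ← Multiset.coe_add, flatmap_perm x n]
    have hb : (([n].flatMap (fun j =>
        if j % 2 = 0 then [3+j, x+3+j] else [x+3+j, 3+j]) : List ℕ) : Multiset ℕ)
        = {3+n, x+3+n} := by
      simp only [List.flatMap_cons, List.flatMap_nil, List.append_nil]
      rcases Nat.even_or_odd n with he | ho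
      · simp only [Nat.even_iff.mp he, if_pos rfl, Multiset.insert_eq_cons]
        rfl
      · simp only [Nat.odd_iff.mp ho, if_neg (by omega : ¬(1:ℕ)=0), Multiset.insert_eq_cons]
        rw [show ((↑[x+3+n, 3+n] : Multiset ℕ)) = (x+3+n) ::ₘ {3+n} from rfl]
        exact Multiset.cons_swap _ _ _
    rw [hb, Multiset.range_succ]
    simp [Multiset.insert_eq_cons, ← Multiset.singleton_add]
    abel

theorem stmt_5 (x : ℕ) (hx : 4 ≤ x) (hev : Even x) :
    List.Perm ([x, 2*x, 0, x+1, 1, x+2, 2] ++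
      (List.range (x-3)).flatMap (fun j =>
        if j % 2 = 0 then [3+j, x+3+j] else [x+3+j, 3+j]))
      (List.range (2*x+1)) ∧
    edgeLengths (2*x+1)
      ([x, 2*x, 0, x+1, 1, x+2, 2] ++
        (List.range (x-3)).flatMap (fun j =>
          if j % 2 = 0 then [3+j, x+3+j] else [x+3+j, 3+j])) =
      Multiset.replicate (x-2) 1 + Multiset.replicate (x+2) x := by
  obtain ⟨k, rfl⟩ : ∃ k, x = k + 4 := ⟨x - 4, by omega⟩
  rw [show k + 4 - 3 = k + 1 by omega, show k + 4 - 2 = k + 2 by omega]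
  constructor
  · -- the permutation statement
    rw [← Multiset.coe_eq_coe, ← Multiset.coe_add]
    have hA : (((List.range (k+1)).flatMap (fun j =>
        if j % 2 = 0 then [3+j, k+4+3+j] else [k+4+3+j, 3+j]) : List ℕ) : Multiset ℕ)
        = (Multiset.range (k+1)).map (fun j => 3+j)
          + (Multiset.range (k+1)).map (fun j => k+7+j) := by
      rw [flatmap_perm (k+4) (k+1)]
    rw [hA]
    have hR : ((List.range (2*(k+4)+1) : List ℕ) : Multiset ℕ)
        = (↑[0,1,2] : Multiset ℕ) + (Multiset.range (k+1)).map (fun j => 3+j)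
          + (↑[k+4,k+5,k+6] : Multiset ℕ)
          + (Multiset.range (k+1)).map (fun j => k+7+j)
          + ({2*k+8} : Multiset ℕ) := by
      have r1 : ((List.range (k+4) : List ℕ) : Multiset ℕ)
          = (↑[0,1,2] : Multiset ℕ) + (Multiset.range (k+1)).map (fun j => 3+j) := by
        have h := List.range_add (n := 3) (m := k+1)
        rw [show (3 + (k+1) : ℕ) = k+4 by ring] at h
        rw [h, ← Multiset.coe_add]
        congr 1
      have r2 : ((List.range (k+5) : List ℕ) : Multiset ℕ)
          = (↑[0,1,2] : Multiset ℕ) + (Multiset.range (k+1)).map (fun j => 3+j) + {k+4} := by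
        rw [show (k+5 : ℕ) = (k+4)+1 by ring, List.range_succ, ← Multiset.coe_add, r1]
        rfl
      have h := List.range_add (n := k+4) (m := k+5)
      rw [show (k+4+(k+5) : ℕ) = 2*(k+4)+1 by ring] at h
      rw [h, ← Multiset.coe_add, ← Multiset.map_coe, r2]
      simp only [Multiset.map_add, Multiset.map_map, r1]
      have m1 : Multiset.map (fun x => k + 4 + x) (↑[0,1,2] : Multiset ℕ) = (↑[k+4,k+5,k+6] : Multiset ℕ) := by
        rw [Multiset.map_coe]
        congr 1
      have m2 : Multiset.map ((fun x => k + 4 + x) ∘ fun j => 3 + j) (Multiset.range (k+1))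
          = Multiset.map (fun j => k + 7 + j) (Multiset.range (k+1)) :=
        Multiset.map_congr rfl (fun a _ => by simp; omega)
      have m3 : Multiset.map (fun x => k + 4 + x) ({k+4} : Multiset ℕ) = ({2*k+8} : Multiset ℕ) := by
        simp; ring
      rw [m1, m2, m3]
      abel
    rw [hR]
    simp only [← Multiset.cons_coe, Multiset.coe_nil, ← Multiset.singleton_add,
      show 2*(k+4) = 2*k+8 by ring, show k+4+1 = k+5 by ring, show k+4+2 = k+6 by ring]
    abel
  · -- the edge lengths statement
    have key := (flatmap_edges (k+4) (by omega) (k+1)).1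
    rw [show ([k+4, 2*(k+4), 0, k+4+1, 1, k+4+2, 2] ++
        (List.range (k+1)).flatMap (fun j =>
          if j % 2 = 0 then [3+j, k+4+3+j] else [k+4+3+j, 3+j]))
        = (k+4) :: (2*(k+4)) :: 0 :: (k+4+1) :: 1 :: (k+4+2) ::
          (2 :: (List.range (k+1)).flatMap (fun j =>
          if j % 2 = 0 then [3+j, k+4+3+j] else [k+4+3+j, 3+j])) from rfl]
    rw [edge_cons, edge_cons, edge_cons, edge_cons, edge_cons, edge_cons, key]
    rw [show ell (2*(k+4)+1) (k+4) (2*(k+4)) = k+4 by simp [ell, Nat.dist]; omega,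
      show ell (2*(k+4)+1) (2*(k+4)) 0 = 1 by simp [ell, Nat.dist]; omega,
      show ell (2*(k+4)+1) 0 (k+4+1) = k+4 by simp [ell, Nat.dist]; omega,
      show ell (2*(k+4)+1) (k+4+1) 1 = k+4 by simp [ell, Nat.dist]; omega,
      show ell (2*(k+4)+1) 1 (k+4+2) = k+4 by simp [ell, Nat.dist]; omega,
      show ell (2*(k+4)+1) (k+4+2) 2 = k+4 by simp [ell, Nat.dist]; omega]
    rw [show (k+2 : ℕ) = (k+1)+1 by ring,
      show (k+4+2 : ℕ) = (((((k+1)+1)+1)+1)+1)+1 by ring]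
    simp only [Multiset.replicate_succ, ← Multiset.singleton_add]
    abel
end

section
/- For each even integer x ≥ 4 and each r, s ≥ 0 with x = 2r + 2s + 4, the concatenation of the three sequences described below is a Hamiltonian path on {0,...,6r+4s+9} in K_{6r+4s+10} whose multiset of edge lengths is {1^{x-2}, x^{x+2r+3}}: first the 2s+2 pairs [2r+1, 4r+2s+5], [4r+2s+6, 2r+2], [2r+3, 4r+2s+7], ..., [4r+4s+6, 2r+2s+2]; then the 2r+1 triples [6r+4s+8, 4r+2s+4, 2r], [2r-1, 4r+2s+3, 6r+4s+7], ..., [4r+4s+8, 2r+2s+4, 0]; then [6r+4s+9, 2r+2s+3, 4r+4s+7]. Here the edge length between u and w in K_v with v = 6r+4s+10 is min(|u-w|, v-|u-w|). -/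
-- E helper
def E (v : ℕ) (h : List ℕ) : List ℕ := List.zipWith (ell v) h h.tail

lemma ell_le (v a b : ℕ) (h : a ≤ b) (h2 : 2*(b-a) ≤ v) : ell v a b = b - a := by
  unfold ell
  rw [Nat.dist_eq_sub_of_le h]
  omega

lemma ell_ge (v a b : ℕ) (h : b ≤ a) (h2 : 2*(a-b) ≤ v) : ell v a b = a - b := by
  unfold ell
  rw [Nat.dist_comm, Nat.dist_eq_sub_of_le h]
  omega

lemma ell_big (v a b : ℕ) (h : a ≤ b) (hb : b < v) (h2 : v ≤ 2*(b-a)) : ell v a b = v - (b-a) := by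
  unfold ell
  rw [Nat.dist_eq_sub_of_le h]
  omega

lemma ell_big' (v a b : ℕ) (h : b ≤ a) (hb : a < v) (h2 : v ≤ 2*(a-b)) : ell v a b = v - (a-b) := by
  unfold ell
  rw [Nat.dist_comm, Nat.dist_eq_sub_of_le h]
  omega

lemma E_split (v y : ℕ) (l1 l2 : List ℕ) :
    E v (l1 ++ y :: l2) = E v (l1 ++ [y]) ++ E v (y :: l2) := by
  induction l1 with
  | nil => simp [E]
  | cons a l ih =>
    cases l with
    | nil =>
      simp [E]
    | cons b t =>
      simp only [List.cons_append, E, List.tail_cons, List.zipWith_cons_cons] at *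
      simp [ih]


lemma add_pair (S : Multiset ℕ) (p q : ℕ) : S + ↑[p, q] = p ::ₘ q ::ₘ S := by
  have h : (↑[p, q] : Multiset ℕ) = p ::ₘ q ::ₘ 0 := rfl
  rw [h, Multiset.add_cons, Multiset.add_cons, add_zero]

lemma add_pair' (S : Multiset ℕ) (p q : ℕ) : S + ↑[q, p] = p ::ₘ q ::ₘ S := by
  rw [add_pair, Multiset.cons_swap]

lemma add_triple (S : Multiset ℕ) (p q u : ℕ) : S + ↑[p, q, u] = p ::ₘ q ::ₘ u ::ₘ S := by
  have h : (↑[p, q, u] : Multiset ℕ) = p ::ₘ q ::ₘ u ::ₘ 0 := rfl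
  rw [h, Multiset.add_cons, Multiset.add_cons, Multiset.add_cons, add_zero]

lemma add_triple' (S : Multiset ℕ) (p q u : ℕ) : S + ↑[u, q, p] = p ::ₘ q ::ₘ u ::ₘ S := by
  rw [add_triple, Multiset.cons_swap u q, Multiset.cons_swap u p, Multiset.cons_swap q p]

def P (a b n : ℕ) : List ℕ :=
  (List.range n).flatMap (fun j => if j % 2 = 0 then [a+j, b+j] else [b+j, a+j])

def T (c d e n : ℕ) : List ℕ :=
  (List.range n).flatMap (fun t => if t % 2 = 0 then [c-t, d-t, e-t] else [e-t, d-t, c-t])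

lemma P_elems (a b n : ℕ) :
    (↑(P a b n) : Multiset ℕ) =
      (Multiset.range n).map (fun j => a + j) + (Multiset.range n).map (fun j => b + j) := by
  induction n with
  | zero => simp [P]
  | succ n ih =>
    rw [P, List.range_succ, List.flatMap_append, ← P]
    by_cases h : n % 2 = 0 <;>
      simp only [List.flatMap_cons, List.flatMap_nil, h, if_true, if_false, List.append_nil] <;>
      rw [← Multiset.coe_add, ih] <;>
      simp only [Multiset.range_succ, Multiset.map_cons] <;>
      simp only [Multiset.cons_add, Multiset.add_cons] <;>
      first
      | exact add_pair _ _ _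
      | exact add_pair' _ _ _

lemma T_elems (c d e n : ℕ) :
    (↑(T c d e n) : Multiset ℕ) =
      (Multiset.range n).map (fun t => c - t) + (Multiset.range n).map (fun t => d - t)
        + (Multiset.range n).map (fun t => e - t) := by
  induction n with
  | zero => simp [T]
  | succ n ih =>
    rw [T, List.range_succ, List.flatMap_append, ← T]
    by_cases h : n % 2 = 0 <;>
      simp only [List.flatMap_cons, List.flatMap_nil, h, if_true, if_false, List.append_nil] <;>
      rw [← Multiset.coe_add, ih] <;>
      simp only [Multiset.range_succ, Multiset.map_cons] <;>
      simp only [Multiset.cons_add, Multiset.add_cons] <;>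
      first
      | exact add_triple _ _ _ _
      | exact add_triple' _ _ _ _

lemma rev_map (c n : ℕ) (h : n ≤ c + 1) :
    (Multiset.range n).map (fun t => c - t) = (Multiset.range n).map (fun t => (c + 1 - n) + t) := by
  conv_lhs => rw [Multiset.range, ← Multiset.coe_reverse, show List.range n = List.range' 0 n by simp [List.range_eq_range'], List.reverse_range']
  rw [← Multiset.map_coe, Multiset.map_map]
  apply Multiset.map_congr (rfl : (↑(List.range n) : Multiset ℕ) = Multiset.range n)
  intro x hx
  simp only [Multiset.mem_coe, List.mem_range] at hx
  simp only [Function.comp_apply]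
  omega

lemma ell_compute (v a b D : ℕ) (h : a + D = b ∨ b + D = a) (h2 : 2*D ≤ v) : ell v a b = D := by
  unfold ell Nat.dist; omega

lemma ell_compute' (v a b D : ℕ) (h : a + D = b ∨ b + D = a) (h2 : v ≤ 2*D) (h3 : D ≤ v) :
    ell v a b = v - D := by
  unfold ell Nat.dist; omega

lemma P_succ (a b n : ℕ) :
    P a b (n+1) = P a b n ++ (if n % 2 = 0 then [a+n, b+n] else [b+n, a+n]) := by
  rw [P, List.range_succ, List.flatMap_append, ← P]; simp

lemma T_succ (c d e n : ℕ) :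
    T c d e (n+1) = T c d e n ++ (if n % 2 = 0 then [c-n, d-n, e-n] else [e-n, d-n, c-n]) := by
  rw [T, List.range_succ, List.flatMap_append, ← T]; simp

lemma P_spec (v a b : ℕ) (hab : a ≤ b) (h2 : 2*(b-a) ≤ v) (hv : 2 ≤ v) :
    ∀ k : ℕ, (∃ l, P a b (2*k+2) = l ++ [a + (2*k+1)]) ∧
      (↑(E v (P a b (2*k+2))) : Multiset ℕ) =
        Multiset.replicate (2*k+2) (b-a) + Multiset.replicate (2*k+1) 1 := by
  intro k
  induction k with
  | zero =>
    have hP : P a b 2 = [a, b, b+1, a+1] := by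
      rw [show (2:ℕ) = 1 + 1 from rfl, P_succ, P_succ, P]
      simp
    constructor
    · exact ⟨[a, b, b+1], by simp [hP]⟩
    · rw [hP]
      simp only [E, List.tail_cons, List.zipWith_cons_cons, List.zipWith_nil_right]
      rw [ell_compute v a b (b-a) (by omega) (by omega),
        ell_compute v b (b+1) 1 (by omega) (by omega),
        ell_compute v (b+1) (a+1) (b-a) (by omega) (by omega)]
      ext x
      simp only [Multiset.count_add, Multiset.count_replicate]
      have : (↑[b-a, 1, b-a] : Multiset ℕ) = (b-a) ::ₘ 1 ::ₘ (b-a) ::ₘ 0 := rfl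
      rw [this]
      simp only [Multiset.count_cons, Multiset.count_zero]
      split_ifs <;> omega
  | succ k ih =>
    obtain ⟨⟨l, hl⟩, hE⟩ := ih
    have hunf : P a b (2*(k+1)+2) =
        P a b (2*k+2) ++ [a+(2*k+2), b+(2*k+2), b+(2*k+3), a+(2*k+3)] := by
      rw [show 2*(k+1)+2 = (2*k+2+1)+1 by ring, P_succ, P_succ]
      rw [if_pos (by omega), if_neg (by omega)]
      simp [show 2*k+2+1 = 2*k+3 by ring]
    constructor
    · exact ⟨l ++ [a+(2*k+1), a+(2*k+2), b+(2*k+2), b+(2*k+3)], by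
        rw [hunf, hl]; simp [show 2*(k+1)+1 = 2*k+3 by ring]⟩
    · rw [hunf, hl, List.append_assoc, List.singleton_append, E_split, ← hl]
      rw [← Multiset.coe_add, hE]
      have hEtail : E v [a+(2*k+1), a+(2*k+2), b+(2*k+2), b+(2*k+3), a+(2*k+3)] =
          [1, b-a, 1, b-a] := by
        simp only [E, List.tail_cons, List.zipWith_cons_cons, List.zipWith_nil_right]
        rw [ell_compute v _ _ 1 (by omega) (by omega),
          ell_compute v _ _ (b-a) (by omega) (by omega),
          ell_compute v _ _ 1 (by omega) (by omega),
          ell_compute v _ _ (b-a) (by omega) (by omega)]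
      rw [hEtail]
      ext x
      simp only [Multiset.count_add, Multiset.count_replicate]
      have : (↑[1, b-a, 1, b-a] : Multiset ℕ) = 1 ::ₘ (b-a) ::ₘ 1 ::ₘ (b-a) ::ₘ 0 := rfl
      rw [this]
      simp only [Multiset.count_cons, Multiset.count_zero]
      split_ifs <;> omega

lemma T_spec (v c d e : ℕ) (hdc : d ≤ c) (hed : e ≤ d) (h1 : 2*(c-d) ≤ v) (h2 : 2*(d-e) ≤ v)
    (hv : 2 ≤ v) :
    ∀ k : ℕ, 2*k ≤ e → (∃ l, T c d e (2*k+1) = (c :: l) ++ [e - 2*k]) ∧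
      (↑(E v (T c d e (2*k+1))) : Multiset ℕ) =
        Multiset.replicate (2*k+1) (c-d) + Multiset.replicate (2*k+1) (d-e)
          + Multiset.replicate (2*k) 1 := by
  intro k
  induction k with
  | zero =>
    intro _
    have hT : T c d e 1 = [c, d, e] := by
      rw [show (1:ℕ) = 0 + 1 from rfl, T_succ, T]
      simp
    constructor
    · exact ⟨[d], by simp [hT]⟩
    · rw [hT]
      simp only [E, List.tail_cons, List.zipWith_cons_cons, List.zipWith_nil_right]
      rw [ell_compute v c d (c-d) (by omega) (by omega),
        ell_compute v d e (d-e) (by omega) (by omega)]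
      ext x
      simp only [Multiset.count_add, Multiset.count_replicate]
      have : (↑[c-d, d-e] : Multiset ℕ) = (c-d) ::ₘ (d-e) ::ₘ 0 := rfl
      rw [this]
      simp only [Multiset.count_cons, Multiset.count_zero]
      split_ifs <;> omega
  | succ k ih =>
    intro hk
    obtain ⟨⟨l, hl⟩, hE⟩ := ih (by omega)
    have hunf : T c d e (2*(k+1)+1) =
        T c d e (2*k+1) ++ [e-(2*k+1), d-(2*k+1), c-(2*k+1), c-(2*k+2), d-(2*k+2), e-(2*k+2)] := by
      rw [show 2*(k+1)+1 = (2*k+1+1)+1 by ring, T_succ, T_succ]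
      rw [if_neg (by omega), if_pos (by omega)]
      simp [show 2*k+1+1 = 2*k+2 by ring]
    constructor
    · exact ⟨l ++ [e-2*k, e-(2*k+1), d-(2*k+1), c-(2*k+1), c-(2*k+2), d-(2*k+2)], by
        rw [hunf, hl]; simp [show 2*(k+1) = 2*k+2 by ring]⟩
    · rw [hunf, hl, List.append_assoc, List.singleton_append, E_split, ← hl]
      rw [← Multiset.coe_add, hE]
      have hEtail : E v [e-2*k, e-(2*k+1), d-(2*k+1), c-(2*k+1), c-(2*k+2), d-(2*k+2), e-(2*k+2)] =
          [1, d-e, c-d, 1, c-d, d-e] := by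
        simp only [E, List.tail_cons, List.zipWith_cons_cons, List.zipWith_nil_right]
        rw [ell_compute v _ _ 1 (by omega) (by omega),
          ell_compute v _ _ (d-e) (by omega) (by omega),
          ell_compute v _ _ (c-d) (by omega) (by omega),
          ell_compute v _ _ 1 (by omega) (by omega),
          ell_compute v _ _ (c-d) (by omega) (by omega),
          ell_compute v _ _ (d-e) (by omega) (by omega)]
      rw [hEtail]
      ext x
      simp only [Multiset.count_add, Multiset.count_replicate]
      have : (↑[1, d-e, c-d, 1, c-d, d-e] : Multiset ℕ) =
          1 ::ₘ (d-e) ::ₘ (c-d) ::ₘ 1 ::ₘ (c-d) ::ₘ (d-e) ::ₘ 0 := rfl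
      rw [this]
      simp only [Multiset.count_cons, Multiset.count_zero]
      split_ifs <;> omega

lemma E_cons_cons (v p q : ℕ) (M : List ℕ) : E v (p :: q :: M) = ell v p q :: E v (q :: M) := rfl

lemma count_interval (x K n : ℕ) :
    ((Multiset.range n).map (fun t => K + t)).count x = if K ≤ x ∧ x < K + n then 1 else 0 := by
  induction n with
  | zero => rw [if_neg (by omega)]; simp
  | succ n ih =>
    rw [Multiset.range_succ, Multiset.map_cons, Multiset.count_cons, ih]
    split_ifs <;> omega

lemma count_mrange (x n : ℕ) : (Multiset.range n).count x = if x < n then 1 else 0 := by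
  induction n with
  | zero => simp
  | succ n ih =>
    rw [Multiset.range_succ, Multiset.count_cons, ih]
    split_ifs <;> omega

set_option maxHeartbeats 2000000 in
theorem stmt_15 (r s : ℕ) :
    List.Perm ((List.range (2*s+2)).flatMap (fun j =>
        if j % 2 = 0 then [2*r+1+j, 4*r+2*s+5+j] else [4*r+2*s+5+j, 2*r+1+j]) ++
      (List.range (2*r+1)).flatMap (fun t =>
        if t % 2 = 0 then [6*r+4*s+8-t, 4*r+2*s+4-t, 2*r-t]
        else [2*r-t, 4*r+2*s+4-t, 6*r+4*s+8-t]) ++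
      [6*r+4*s+9, 2*r+2*s+3, 4*r+4*s+7])
      (List.range (6*r+4*s+10)) ∧
    edgeLengths (6*r+4*s+10)
      ((List.range (2*s+2)).flatMap (fun j =>
          if j % 2 = 0 then [2*r+1+j, 4*r+2*s+5+j] else [4*r+2*s+5+j, 2*r+1+j]) ++
        (List.range (2*r+1)).flatMap (fun t =>
          if t % 2 = 0 then [6*r+4*s+8-t, 4*r+2*s+4-t, 2*r-t]
          else [2*r-t, 4*r+2*s+4-t, 6*r+4*s+8-t]) ++
        [6*r+4*s+9, 2*r+2*s+3, 4*r+4*s+7]) =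
      Multiset.replicate (2*r+2*s+2) 1 +
        Multiset.replicate (4*r+2*s+7) (2*r+2*s+4) := by
  have hb1 : (List.range (2*s+2)).flatMap (fun j =>
      if j % 2 = 0 then [2*r+1+j, 4*r+2*s+5+j] else [4*r+2*s+5+j, 2*r+1+j])
      = P (2*r+1) (4*r+2*s+5) (2*s+2) := rfl
  have hb2 : (List.range (2*r+1)).flatMap (fun t =>
      if t % 2 = 0 then [6*r+4*s+8-t, 4*r+2*s+4-t, 2*r-t]
      else [2*r-t, 4*r+2*s+4-t, 6*r+4*s+8-t])
      = T (6*r+4*s+8) (4*r+2*s+4) (2*r) (2*r+1) := rfl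
  rw [hb1, hb2]
  constructor
  · -- Part A
    refine Multiset.coe_eq_coe.mp ?_
    rw [← Multiset.coe_add, ← Multiset.coe_add]
    rw [P_elems, T_elems]
    rw [rev_map (6*r+4*s+8) (2*r+1) (by omega), rev_map (4*r+2*s+4) (2*r+1) (by omega),
      rev_map (2*r) (2*r+1) (by omega),
      show (↑(List.range (6*r+4*s+10)) : Multiset ℕ) = Multiset.range (6*r+4*s+10) from rfl]
    ext x
    have h3 : (↑[6*r+4*s+9, 2*r+2*s+3, 4*r+4*s+7] : Multiset ℕ)
        = (6*r+4*s+9) ::ₘ (2*r+2*s+3) ::ₘ (4*r+4*s+7) ::ₘ 0 := rfl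
    rw [h3]
    simp only [Multiset.count_add, count_interval, count_mrange, Multiset.count_cons,
      Multiset.count_zero]
    split_ifs <;> omega
  · -- Part B
    obtain ⟨⟨l1, hl1⟩, hE1⟩ :=
      P_spec (6*r+4*s+10) (2*r+1) (4*r+2*s+5) (by omega) (by omega) (by omega) s
    obtain ⟨⟨l2, hl2⟩, hE2⟩ :=
      T_spec (6*r+4*s+10) (6*r+4*s+8) (4*r+2*s+4) (2*r) (by omega) (by omega) (by omega)
        (by omega) (by omega) r (by omega)
    have hEL : ∀ L : List ℕ, edgeLengths (6*r+4*s+10) L = ↑(E (6*r+4*s+10) L) := fun _ => rfl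
    rw [hEL]
    rw [hl1, List.append_assoc, List.append_assoc, List.singleton_append, E_split, ← hl1, ← Multiset.coe_add, hE1]
    rw [hl2, List.cons_append, List.cons_append, E_cons_cons, List.append_assoc,
      List.singleton_append, ← List.cons_append, E_split, ← hl2, ← Multiset.cons_coe,
      ← Multiset.coe_add, hE2]
    have he1 : ell (6*r+4*s+10) (2*r+1+(2*s+1)) (6*r+4*s+8) = 2*r+2*s+4 := by
      rw [ell_compute' (6*r+4*s+10) _ _ (4*r+2*s+6) (by omega) (by omega) (by omega)]; omega
    have he2 : E (6*r+4*s+10) ((2*r - 2*r) :: [6*r+4*s+9, 2*r+2*s+3, 4*r+4*s+7]) =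
        [1, 2*r+2*s+4, 2*r+2*s+4] := by
      simp only [E, List.tail_cons, List.zipWith_cons_cons, List.zipWith_nil_right]
      rw [ell_compute' (6*r+4*s+10) _ _ (6*r+4*s+9) (by omega) (by omega) (by omega),
        ell_compute' (6*r+4*s+10) _ _ (4*r+2*s+6) (by omega) (by omega) (by omega),
        ell_compute (6*r+4*s+10) _ _ (2*r+2*s+4) (by omega) (by omega)]
      norm_num
      omega
    rw [he1, he2]
    ext x
    have h3 : (↑[1, 2*r+2*s+4, 2*r+2*s+4] : Multiset ℕ) =
        1 ::ₘ (2*r+2*s+4) ::ₘ (2*r+2*s+4) ::ₘ 0 := rfl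
    rw [h3]
    simp only [Multiset.count_add, Multiset.count_replicate, Multiset.count_cons,
      Multiset.count_zero]
    split_ifs <;> omega
end
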